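/- Let G be a simple graph on n vertices with no isolated vertices. If G is disconnected, then the largest eigenvalue λ_n of the normalized graph Laplacian of G satisfies λ_n ≥ n/(n−2), and in particular λ_n > (n+1)/(n−1). -/

import Mathlib

open Finset Matrix

/-- The normalized graph Laplacian `Lf(x) = f(x) - (1/d(x)) ∑_{y ~ x} f(y)`. -/
noncomputable def normLap {V : Type*} [Fintype V] [DecidableEq V] (G : SimpleGraph V)
    [DecidableRel G.Adj] (f : V → ℝ) : V → ℝ :=
  fun x => f x - (∑ y ∈ G.neighborFinset x, f y) / (G.degree x : ℝ)

/-- `μ` is an eigenvalue of the normalized Laplacian of `G`. -/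
def IsNormLapEigenvalue {V : Type*} [Fintype V] [DecidableEq V] (G : SimpleGraph V)
    [DecidableRel G.Adj] (μ : ℝ) : Prop :=
  ∃ f : V → ℝ, f ≠ 0 ∧ normLap G f = μ • f

/-- `μ` is the largest eigenvalue of the normalized Laplacian of `G`. -/
def IsMaxNormLapEigenvalue {V : Type*} [Fintype V] [DecidableEq V] (G : SimpleGraph V)
    [DecidableRel G.Adj] (μ : ℝ) : Prop :=
  IsNormLapEigenvalue G μ ∧ ∀ ν, IsNormLapEigenvalue G ν → ν ≤ μ

section Aux
variable {V : Type*} [Fintype V] [DecidableEq V] (G : SimpleGraph V) [DecidableRel G.Adj]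

noncomputable def symNL : Matrix V V ℝ := fun x y =>
  (if x = y then (1:ℝ) else 0) -
    (if G.Adj x y then 1 / (Real.sqrt (G.degree x) * Real.sqrt (G.degree y)) else 0)

variable {G}

lemma symNL_isHermitian : (symNL G).IsHermitian := by
  ext x y
  simp only [symNL, Matrix.conjTranspose_apply, star_trivial]
  congr 1
  · simp [eq_comm]
  · simp only [G.adj_comm x y]
    congr 2
    ring

lemma symNL_mulVec (g : V → ℝ) (x : V) :
    (symNL G *ᵥ g) x = g x - ∑ y ∈ G.neighborFinset x,
      g y / (Real.sqrt (G.degree x) * Real.sqrt (G.degree y)) := by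
  simp only [Matrix.mulVec, dotProduct, symNL, sub_mul, ite_mul, one_mul, zero_mul,
    Finset.sum_sub_distrib, Finset.sum_ite_eq, Finset.mem_univ, if_true]
  congr 1
  rw [SimpleGraph.neighborFinset_eq_filter, Finset.sum_filter]
  exact Finset.sum_congr rfl fun y _ => by split <;> simp [div_eq_mul_inv, mul_comm]

lemma symNL_trace : (symNL G).trace = (Fintype.card V : ℝ) := by
  simp [Matrix.trace, Matrix.diag, symNL]

variable (hdeg : ∀ v : V, 1 ≤ G.degree v)
include hdeg

lemma deg_pos (x : V) : (0:ℝ) < (G.degree x : ℝ) := by exact_mod_cast hdeg x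

lemma sqrt_deg_pos (x : V) : (0:ℝ) < Real.sqrt (G.degree x) :=
  Real.sqrt_pos.2 (deg_pos hdeg x)

/-- Eigenvalues of the symmetric matrix transfer to the normalized Laplacian. -/
lemma isEigen_of_symNL {μ : ℝ} {g : V → ℝ} (hg : g ≠ 0)
    (h : symNL G *ᵥ g = μ • g) : IsNormLapEigenvalue G μ := by
  set s : V → ℝ := fun x => Real.sqrt (G.degree x) with hs
  have hsp : ∀ x, 0 < s x := sqrt_deg_pos hdeg
  refine ⟨fun x => g x / s x, ?_, ?_⟩
  · intro h0
    apply hg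
    funext x
    have := congrFun h0 x
    simpa [div_eq_zero_iff, (hsp x).ne'] using this
  · funext x
    have hx := congrFun h x
    rw [symNL_mulVec] at hx
    have hrw : ∀ y ∈ G.neighborFinset x, g y / (s x * s y) = (g y / s y) / s x := by
      intro y _
      rw [div_div, mul_comm]
    rw [Finset.sum_congr rfl hrw, ← Finset.sum_div] at hx
    have hd : (G.degree x : ℝ) = s x * s x := (Real.mul_self_sqrt (deg_pos hdeg x).le).symm
    simp only [normLap, Pi.smul_apply, smul_eq_mul] at hx ⊢
    rw [hd, ← div_div, ← sub_div, hx, mul_div_assoc]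


lemma symNL_mulVec_indicator (p : V → Prop) [DecidablePred p]
    (hp : ∀ x y, G.Adj x y → (p x ↔ p y)) :
    symNL G *ᵥ (fun x => if p x then Real.sqrt (G.degree x) else 0) = 0 := by
  funext x
  rw [Pi.zero_apply, symNL_mulVec]
  by_cases hx : p x
  · have hterm : ∀ y ∈ G.neighborFinset x,
        (if p y then Real.sqrt (G.degree y) else 0) /
          (Real.sqrt (G.degree x) * Real.sqrt (G.degree y)) = 1 / Real.sqrt (G.degree x) := by
      intro y hy
      rw [SimpleGraph.mem_neighborFinset] at hy
      rw [if_pos ((hp x y hy).1 hx), mul_comm, ← div_div, div_self (sqrt_deg_pos hdeg y).ne']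
    rw [Finset.sum_congr rfl hterm, Finset.sum_const, if_pos hx]
    rw [G.card_neighborFinset_eq_degree x, nsmul_eq_mul, mul_one_div, Real.div_sqrt, sub_self]
  · have hterm : ∀ y ∈ G.neighborFinset x,
        (if p y then Real.sqrt (G.degree y) else 0) /
          (Real.sqrt (G.degree x) * Real.sqrt (G.degree y)) = 0 := by
      intro y hy
      rw [SimpleGraph.mem_neighborFinset] at hy
      rw [if_neg (fun h => hx ((hp x y hy).2 h)), zero_div]
    rw [Finset.sum_congr rfl hterm, Finset.sum_const, if_neg hx, smul_zero, sub_zero]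

end Aux

lemma trace_eq_sum_eigs {m : Type*} [Fintype m] [DecidableEq m] {A : Matrix m m ℝ}
    (hA : A.IsHermitian) : A.trace = ∑ i, hA.eigenvalues i := by
  simpa using hA.trace_eq_sum_eigenvalues

/-- A disconnected graph on `n` vertices with no isolated vertices has
largest normalized Laplacian eigenvalue at least `n/(n-2)`, which is strictly greater
than `(n+1)/(n-1)`. -/
theorem maxEigenvalue_of_disconnected {V : Type*} [Fintype V] [DecidableEq V]
    (G : SimpleGraph V) [DecidableRel G.Adj] (n : ℕ) (hn : n = Fintype.card V)
    (hdeg : ∀ v : V, 1 ≤ G.degree v)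
    (hdisc : ¬ G.Preconnected)
    (lam : ℝ) (hlam : IsMaxNormLapEigenvalue G lam) :
    lam ≥ (n : ℝ) / ((n : ℝ) - 2) ∧ lam > ((n : ℝ) + 1) / ((n : ℝ) - 1) := by
  classical
  obtain ⟨u, v, huv⟩ : ∃ u v : V, ¬ G.Reachable u v := by
    simpa [SimpleGraph.Preconnected, not_forall] using hdisc
  set s : V → ℝ := fun x => Real.sqrt (G.degree x) with hs
  have hsp : ∀ x, 0 < s x := sqrt_deg_pos hdeg
  -- two kernel vectors
  have hk1 : symNL G *ᵥ s = 0 := by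
    have := symNL_mulVec_indicator hdeg (fun _ : V => True) (fun _ _ _ => Iff.rfl)
    simpa using this
  set w : V → ℝ := fun x => if G.Reachable u x then s x else 0 with hw
  have hk2 : symNL G *ᵥ w = 0 :=
    symNL_mulVec_indicator hdeg _ (fun x y hxy =>
      ⟨fun h => h.trans hxy.reachable, fun h => h.trans hxy.symm.reachable⟩)
  have hwu : w u = s u := if_pos (SimpleGraph.Reachable.refl u)
  have hwv : w v = 0 := if_neg huv
  have hsne : s ≠ 0 := fun h0 => (hsp u).ne' (by simpa using congrFun h0 u)
  have hwne : w ≠ 0 := fun h0 => (hsp u).ne' (by simpa [hwu] using congrFun h0 u)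
  -- lam is at least 0
  have lam0 : (0:ℝ) ≤ lam := by
    refine hlam.2 0 (isEigen_of_symNL hdeg hsne ?_)
    rw [hk1, zero_smul]
  -- linear independence of the kernel vectors
  have hind : LinearIndependent ℝ ![w, s] := by
    rw [LinearIndependent.pair_iff' hwne]
    intro a ha
    have := congrFun ha v
    simp only [Pi.smul_apply, hwv, smul_eq_mul, mul_zero] at this
    exact (hsp v).ne' this.symm
  -- the kernel has dimension at least 2
  set K := LinearMap.ker (symNL G).mulVecLin with hK
  have hm1 : s ∈ K := by rw [hK, LinearMap.mem_ker, Matrix.mulVecLin_apply]; exact hk1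
  have hm2 : w ∈ K := by rw [hK, LinearMap.mem_ker, Matrix.mulVecLin_apply]; exact hk2
  have hc : LinearIndependent ℝ (![⟨w, hm2⟩, ⟨s, hm1⟩] : Fin 2 → K) := by
    apply LinearIndependent.of_comp K.subtype
    have : K.subtype ∘ (![⟨w, hm2⟩, ⟨s, hm1⟩] : Fin 2 → K) = ![w, s] := by
      funext i; fin_cases i <;> rfl
    rw [this]; exact hind
  have hker2 : 2 ≤ Module.finrank ℝ K := by simpa using hc.fintype_card_le_finrank
  have hrank : (symNL G).rank + Module.finrank ℝ K = Fintype.card V := by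
    rw [Matrix.rank, LinearMap.finrank_range_add_finrank_ker]
    simp [Module.finrank_fintype_fun_eq_card]
  -- eigenvalues
  have hH : (symNL G).IsHermitian := symNL_isHermitian
  have hle : ∀ i, hH.eigenvalues i ≤ lam := by
    intro i
    refine hlam.2 _ (isEigen_of_symNL hdeg ?_ (hH.mulVec_eigenvectorBasis i))
    simpa using hH.eigenvectorBasis.orthonormal.ne_zero i
  have htr : (Fintype.card V : ℝ) = ∑ i, hH.eigenvalues i := by
    exact (symNL_trace (G := G)).symm.trans (trace_eq_sum_eigs hH)
  set S := Finset.univ.filter (fun i => hH.eigenvalues i ≠ 0) with hS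
  have hsum : ∑ i ∈ S, hH.eigenvalues i = ∑ i, hH.eigenvalues i :=
    Finset.sum_filter_ne_zero _
  have hcardS : S.card = (symNL G).rank := by
    rw [hH.rank_eq_card_non_zero_eigs, Fintype.card_subtype]
  have hcard_le : S.card + 2 ≤ Fintype.card V := by omega
  have hbound : (Fintype.card V : ℝ) ≤ (S.card : ℝ) * lam := by
    rw [htr, ← hsum]
    calc ∑ i ∈ S, hH.eigenvalues i ≤ ∑ _i ∈ S, lam := Finset.sum_le_sum (fun i _ => hle i)
      _ = (S.card : ℝ) * lam := by rw [Finset.sum_const, nsmul_eq_mul]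
  -- the graph has at least 3 vertices
  obtain ⟨u', hu'⟩ : ∃ u', u' ∈ G.neighborFinset u := by
    apply Finset.Nonempty.exists_mem
    rw [← Finset.card_pos, SimpleGraph.card_neighborFinset_eq_degree]
    exact hdeg u
  rw [SimpleGraph.mem_neighborFinset] at hu'
  have hvu : v ≠ u := fun h => huv (by rw [h])
  have hvu' : v ≠ u' := fun h => huv (by rw [h]; exact hu'.reachable)
  have hu'u : u' ≠ u := hu'.ne'
  have hn3 : 3 ≤ n := by
    rw [hn, ← Finset.card_univ]
    calc 3 = ({v, u', u} : Finset V).card := by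
            rw [Finset.card_insert_of_notMem (by simp [hvu, hvu']),
              Finset.card_insert_of_notMem (by simp [hu'u]), Finset.card_singleton]
      _ ≤ Finset.univ.card := Finset.card_le_card (Finset.subset_univ _)
  -- final arithmetic
  have hcn : S.card + 2 ≤ n := by omega
  have hcast : (S.card : ℝ) ≤ (n : ℝ) - 2 := by
    have : ((S.card + 2 : ℕ) : ℝ) ≤ (n : ℝ) := Nat.cast_le.2 hcn
    push_cast at this
    linarith
  have hnR : (3:ℝ) ≤ (n:ℝ) := by exact_mod_cast hn3
  have hmain : (n : ℝ) ≤ ((n:ℝ) - 2) * lam := by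
    calc (n : ℝ) = (Fintype.card V : ℝ) := by rw [hn]
      _ ≤ (S.card : ℝ) * lam := hbound
      _ ≤ ((n:ℝ) - 2) * lam := mul_le_mul_of_nonneg_right hcast lam0
  have h1 : (n : ℝ) / ((n:ℝ) - 2) ≤ lam := by
    rw [div_le_iff₀ (by linarith)]
    linarith [hmain]
  refine ⟨h1, lt_of_lt_of_le ?_ h1⟩
  rw [div_lt_div_iff₀ (by linarith) (by linarith)]
  nlinarith
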